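/- Let ξ be a nonnegative real random variable whose law has density f_ξ(y) = y^a e^{-y/b} / (b^{a+1} Γ(a+1)) for y > 0, where a > -1 and b > 0, and let γ̄ > 0, p > 0, q > 0. Then the average symbol error probability of the RIS-assisted link satisfies E[p · Q(√(2 q γ̄ ξ²))] = (p √q / (2 √π Γ(a+1))) ∫₀^∞ e^{-q t} t^{-1/2} γ_low(a+1, √t/(b√γ̄)) dt, where γ_low(s, x) = ∫₀^x u^{s-1} e^{-u} du is the lower incomplete Gamma function and Q(x) = (1/√(2π)) ∫_x^∞ e^{-s²/2} ds is the Gaussian Q-function. -/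

import Mathlib

open MeasureTheory Real Set
open scoped ENNReal NNReal

noncomputable def gaussQ (x : ℝ) : ℝ :=
  (1 / Real.sqrt (2 * π)) * ∫ s in Set.Ioi x, Real.exp (-s ^ 2 / 2)

noncomputable def lowerIncGamma (s x : ℝ) : ℝ :=
  ∫ u in Set.Ioc (0 : ℝ) x, u ^ (s - 1) * Real.exp (-u)

section aux
variable {q : ℝ}

lemma hh_nn (q : ℝ) : ∀ t : ℝ, 0 ≤ Real.exp (-q*t) * t ^ (-(1:ℝ)/2) := by
  intro t
  rcases lt_trichotomy t 0 with ht | rfl | ht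
  · rw [Real.rpow_def_of_neg ht]
    have : Real.cos (-(1:ℝ)/2 * π) = 0 := by
      rw [show (-(1:ℝ)/2 * π) = -(π/2) by ring, Real.cos_neg, Real.cos_pi_div_two]
    rw [this, mul_zero, mul_zero]
  · rw [Real.zero_rpow (by norm_num : (-(1:ℝ)/2) ≠ 0), mul_zero]
  · positivity

lemma hh_meas (q : ℝ) : Measurable (fun t : ℝ => Real.exp (-q*t) * t ^ (-(1:ℝ)/2)) := by
  fun_prop

lemma hInt (q : ℝ) (hq : 0 < q) :
    IntegrableOn (fun t : ℝ => Real.exp (-q*t) * t ^ (-(1:ℝ)/2)) (Ioi 0) := by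
  have h := integrableOn_rpow_mul_exp_neg_mul_rpow
    (show (-1:ℝ) < -(1:ℝ)/2 by norm_num) (by norm_num : (0:ℝ) < 1) hq
  refine h.congr_fun (fun t ht => ?_) measurableSet_Ioi
  dsimp only
  rw [Real.rpow_one, mul_comm]

lemma hInt' (q : ℝ) (hq : 0 < q) (A : ℝ) :
    IntegrableOn (fun t : ℝ => Real.exp (-q*t) * t ^ (-(1:ℝ)/2)) (Ioi A) := by
  rcases le_or_gt 0 A with hA | hA
  · exact (hInt q hq).mono_set (Ioi_subset_Ioi hA)
  · have : Ioi A = Ioc A 0 ∪ Ioi 0 := (Ioc_union_Ioi_eq_Ioi hA.le).symm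
    rw [this]
    refine IntegrableOn.union ?_ (hInt q hq)
    refine (integrableOn_zero).congr_fun (fun t ht => ?_) measurableSet_Ioc
    rcases lt_or_eq_of_le ht.2 with h0 | rfl
    · rw [Real.rpow_def_of_neg h0]
      have : Real.cos (-(1:ℝ)/2 * π) = 0 := by
        rw [show (-(1:ℝ)/2 * π) = -(π/2) by ring, Real.cos_neg, Real.cos_pi_div_two]
      rw [this, mul_zero, mul_zero]
    · rw [Real.zero_rpow (by norm_num : (-(1:ℝ)/2) ≠ 0), mul_zero]

lemma K_antitone (q : ℝ) (hq : 0 < q) :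
    Antitone (fun A : ℝ => ∫ t in Ioi A, Real.exp (-q*t) * t ^ (-(1:ℝ)/2)) := by
  intro A B hAB
  refine setIntegral_mono_set (hInt' q hq A) ?_ ?_
  · exact Filter.Eventually.of_forall fun t => hh_nn q t
  · exact HasSubset.Subset.eventuallyLE (Ioi_subset_Ioi hAB)

lemma expsq_integrable : Integrable (fun s : ℝ => Real.exp (-s ^ 2 / 2)) := by
  have := integrable_exp_neg_mul_sq (show (0:ℝ) < 1/2 by norm_num)
  refine this.congr (Filter.Eventually.of_forall fun s => by ring_nf)

lemma gaussQ_antitone : Antitone gaussQ := by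
  intro x y hxy
  unfold gaussQ
  have h1 : (0:ℝ) ≤ 1 / Real.sqrt (2 * π) := by positivity
  refine mul_le_mul_of_nonneg_left ?_ h1
  refine setIntegral_mono_set expsq_integrable.integrableOn ?_ ?_
  · exact Filter.Eventually.of_forall fun s => (Real.exp_pos _).le
  · exact HasSubset.Subset.eventuallyLE (Ioi_subset_Ioi hxy)

lemma gaussQ_measurable : Measurable gaussQ := gaussQ_antitone.measurable

end aux

lemma sq_image (q x : ℝ) (hq : 0 < q) (hx : 0 < x) :
    (fun s : ℝ => s^2/(2*q)) '' (Ioi x) = Ioi (x^2/(2*q)) := by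
  ext t
  simp only [mem_image, mem_Ioi]
  constructor
  · rintro ⟨s, hs, rfl⟩
    exact div_lt_div_of_pos_right (by nlinarith) (by linarith)
  · intro ht
    have htpos : 0 < t := lt_of_le_of_lt (by positivity) ht
    have h2qt : (0:ℝ) ≤ 2*q*t := by positivity
    refine ⟨Real.sqrt (2*q*t), ?_, ?_⟩
    · have h2 : x^2 < 2*q*t := by
        rw [div_lt_iff₀ (by linarith)] at ht; nlinarith
      exact (Real.lt_sqrt hx.le).mpr h2
    · rw [Real.sq_sqrt h2qt]; field_simp

lemma gaussQ_rep (q x : ℝ) (hq : 0 < q) (hx : 0 < x) :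
    gaussQ x = (Real.sqrt q/(2*Real.sqrt π)) *
      ∫ t in Ioi (x^2/(2*q)), Real.exp (-q*t) * t ^ (-(1:ℝ)/2) := by
  have hderiv : ∀ s ∈ Ioi x, HasDerivWithinAt (fun s : ℝ => s^2/(2*q)) (s/q) (Ioi x) s := by
    intro s hs
    have h : HasDerivAt (fun s : ℝ => s^2/(2*q)) ((↑2*s^1)/(2*q)) s :=
      (hasDerivAt_pow 2 s).div_const (2*q)
    have h2 : (↑2*s^1)/(2*q) = s/q := by field_simp
    rw [h2] at h
    exact h.hasDerivWithinAt
  have hinj : InjOn (fun s : ℝ => s^2/(2*q)) (Ioi x) := by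
    intro u hu v hv huv
    simp only [mem_Ioi] at hu hv
    simp only [div_eq_div_iff (by linarith : (0:ℝ) < 2*q).ne' (by linarith : (0:ℝ) < 2*q).ne'] at huv
    have h := mul_right_cancel₀ (by positivity : (2*q) ≠ 0) huv
    nlinarith
  have key := integral_image_eq_integral_abs_deriv_smul measurableSet_Ioi hderiv hinj
    (fun t => Real.exp (-q*t) * t ^ (-(1:ℝ)/2))
  rw [sq_image q x hq hx] at key
  have hcong : EqOn (fun s => |s/q| • (Real.exp (-q*(s^2/(2*q))) * (s^2/(2*q)) ^ (-(1:ℝ)/2)))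
      (fun s => (Real.sqrt (2*q)/q) * Real.exp (-s^2/2)) (Ioi x) := by
    intro s hs
    have hs0 : 0 < s := lt_trans hx hs
    have h1 : -q*(s^2/(2*q)) = -s^2/2 := by field_simp
    have h2 : (s^2/(2*q)) ^ (-(1:ℝ)/2) = Real.sqrt (2*q) / s := by
      rw [show (-(1:ℝ)/2) = -(1/2) by norm_num, Real.rpow_neg (by positivity),
        ← Real.sqrt_eq_rpow, Real.sqrt_div (sq_nonneg s), Real.sqrt_sq hs0.le, inv_div]
    simp only [smul_eq_mul, h1, h2, abs_of_pos (div_pos hs0 hq)]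
    field_simp
  rw [setIntegral_congr_fun measurableSet_Ioi hcong, integral_const_mul] at key
  have hc : (1/Real.sqrt (2*π)) = (Real.sqrt q/(2*Real.sqrt π)) * (Real.sqrt (2*q)/q) := by
    have h2 : Real.sqrt 2 * Real.sqrt 2 = 2 := Real.mul_self_sqrt (by norm_num)
    have hqq : Real.sqrt q * Real.sqrt q = q := Real.mul_self_sqrt hq.le
    have hπ0 : (0:ℝ) < Real.sqrt π := Real.sqrt_pos.mpr Real.pi_pos
    have hs2 : (0:ℝ) < Real.sqrt 2 := by positivity
    have hsq : (0:ℝ) < Real.sqrt q := Real.sqrt_pos.mpr hq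
    rw [Real.sqrt_mul (by norm_num : (0:ℝ) ≤ 2) q, Real.sqrt_mul (by norm_num : (0:ℝ) ≤ 2) π]
    field_simp
    linear_combination (-(Real.sqrt 2*Real.sqrt 2))*hqq + (-q)*h2
  rw [key, gaussQ, hc]; ring

lemma cdf_eq (a b : ℝ) (ha : -1 < a) (hb : 0 < b) (X : ℝ) :
    (∫ y in Ioc (0:ℝ) X,
      (if 0 < y then y ^ a * Real.exp (-y / b) / (b ^ (a + 1) * Real.Gamma (a + 1)) else 0))
      = lowerIncGamma (a+1) (X/b) / Real.Gamma (a+1) := by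
  have hΓ : 0 < Real.Gamma (a+1) := Real.Gamma_pos_of_pos (by linarith)
  have hbp : 0 < b ^ (a+1) := Real.rpow_pos_of_pos hb _
  have h1 : (∫ y in Ioc (0:ℝ) X,
      (if 0 < y then y ^ a * Real.exp (-y / b) / (b ^ (a + 1) * Real.Gamma (a + 1)) else 0))
      = (∫ y in Ioc (0:ℝ) X, y ^ a * Real.exp (-y / b)) / (b ^ (a + 1) * Real.Gamma (a + 1)) := by
    rw [← integral_div]
    refine setIntegral_congr_fun measurableSet_Ioc (fun y hy => ?_)
    rw [if_pos hy.1]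
  rw [h1]
  have hderiv : ∀ u ∈ Ioc (0:ℝ) (X/b), HasDerivWithinAt (fun u : ℝ => b*u) b (Ioc (0:ℝ) (X/b)) u := by
    intro u _
    simpa using ((hasDerivAt_id u).const_mul b).hasDerivWithinAt
  have hinj : InjOn (fun u : ℝ => b*u) (Ioc (0:ℝ) (X/b)) :=
    fun u _ v _ h => mul_left_cancel₀ hb.ne' h
  have himg : (fun u : ℝ => b*u) '' Ioc (0:ℝ) (X/b) = Ioc (0:ℝ) X := by
    have := image_mul_left_Ioc hb 0 (X/b)
    rw [this, mul_zero, mul_div_cancel₀ _ hb.ne']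
  have key := integral_image_eq_integral_abs_deriv_smul measurableSet_Ioc hderiv hinj
    (fun y => y ^ a * Real.exp (-y / b))
  rw [himg] at key
  have hcong : EqOn (fun u => |b| • ((b*u) ^ a * Real.exp (-(b*u) / b)))
      (fun u => b^(a+1) * (u ^ ((a+1)-1) * Real.exp (-u))) (Ioc (0:ℝ) (X/b)) := by
    intro u hu
    have hu0 : 0 < u := hu.1
    simp only [smul_eq_mul]
    rw [abs_of_pos hb, Real.mul_rpow hb.le hu0.le, neg_div, mul_div_cancel_left₀ _ hb.ne',
      add_sub_cancel_right, Real.rpow_add_one hb.ne' a]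
    ring
  rw [setIntegral_congr_fun measurableSet_Ioc hcong, integral_const_mul] at key
  rw [key, lowerIncGamma]
  field_simp

set_option maxHeartbeats 1000000 in
/-- For a nonnegative random variable `ξ` with the Gamma-type density
`y ^ a * exp (-y / b) / (b ^ (a+1) * Γ(a+1))` on `(0, ∞)` (parameters `a > -1`, `b > 0`),
average SNR `γ̄ > 0`, and modulation constants `p, q > 0`, the average symbol error
probability of the RIS-assisted link satisfies
`E[p Q(√(2 q γ̄ ξ²))]
  = (p √q / (2 √π Γ(a+1))) ∫₀^∞ e^(-q t) t^(-1/2) γ_low(a+1, √t/(b√γ̄)) dt`. -/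
theorem asep_ris
    {Ω : Type*} [MeasurableSpace Ω] (P : Measure Ω) [IsProbabilityMeasure P]
    (ξ : Ω → ℝ) (hξmeas : Measurable ξ) (hξnn : ∀ ω, 0 ≤ ξ ω)
    (a b γbar : ℝ) (ha : -1 < a) (hb : 0 < b) (hγbar : 0 < γbar)
    (hlaw : Measure.map ξ P =
      volume.withDensity (fun y => ENNReal.ofReal
        (if 0 < y then y ^ a * Real.exp (-y / b) / (b ^ (a + 1) * Real.Gamma (a + 1))
         else 0)))
    (p q : ℝ) (hp : 0 < p) (hq : 0 < q) :
    (∫ ω, p * gaussQ (Real.sqrt (2 * q * (γbar * (ξ ω) ^ 2))) ∂P) =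
      (p * Real.sqrt q / (2 * Real.sqrt π * Real.Gamma (a + 1))) *
        ∫ t in Set.Ioi (0 : ℝ),
          Real.exp (-q * t) * t ^ (-(1 : ℝ) / 2) *
            lowerIncGamma (a + 1) (Real.sqrt t / (b * Real.sqrt γbar)) := by
  have hΓ : 0 < Real.Gamma (a+1) := Real.Gamma_pos_of_pos (by linarith)
  set F : ℝ → ℝ := fun y =>
    if 0 < y then y ^ a * Real.exp (-y / b) / (b ^ (a + 1) * Real.Gamma (a + 1)) else 0 with hF
  set h : ℝ → ℝ := fun t => Real.exp (-q*t) * t ^ (-(1:ℝ)/2) with hhdef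
  set H : ℝ → ℝ := fun y => ∫ t in Ioi (γbar*y^2), h t with hHdef
  set G : ℝ → ℝ := fun t => ∫ y in Ioc (0:ℝ) (Real.sqrt (t/γbar)), F y with hGdef
  have hFmeas : Measurable F := by
    refine Measurable.ite measurableSet_Ioi ?_ measurable_const
    fun_prop
  have hFnn : ∀ y, 0 ≤ F y := by
    intro y
    rw [hF]
    dsimp only
    split_ifs with hy
    · positivity
    · exact le_refl 0
  have hFint : Integrable F := by
    have hprob : IsProbabilityMeasure (Measure.map ξ P) :=
      Measure.isProbabilityMeasure_map hξmeas.aemeasurable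
    rw [hlaw] at hprob
    have h1 : (∫⁻ y, ENNReal.ofReal (F y)) = 1 := by
      have h2 := hprob.measure_univ
      rwa [withDensity_apply _ MeasurableSet.univ, Measure.restrict_univ] at h2
    refine ⟨hFmeas.aestronglyMeasurable, ?_⟩
    rw [hasFiniteIntegral_iff_ofReal (Filter.Eventually.of_forall hFnn), h1]
    exact ENNReal.one_lt_top
  have hg : Measurable (fun y : ℝ => p * gaussQ (Real.sqrt (2*q*(γbar*y^2)))) := by
    apply measurable_const.mul
    exact gaussQ_measurable.comp (by fun_prop)
  have hHmeas : Measurable H :=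
    (K_antitone q hq).measurable.comp (by fun_prop : Measurable fun y : ℝ => γbar*y^2)
  have hHnn : ∀ y, 0 ≤ H y := fun y =>
    setIntegral_nonneg measurableSet_Ioi (fun t _ => hh_nn q t)
  have hGmeas : Measurable G := by
    have hmono : Monotone (fun X : ℝ => ∫ y in Ioc (0:ℝ) X, F y) := by
      intro X Y hXY
      refine setIntegral_mono_set hFint.integrableOn
        (Filter.Eventually.of_forall hFnn)
        (HasSubset.Subset.eventuallyLE (Ioc_subset_Ioc_right hXY))
    exact hmono.measurable.comp (by fun_prop : Measurable fun t : ℝ => Real.sqrt (t/γbar))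
  have hGnn : ∀ t, 0 ≤ G t := fun t =>
    setIntegral_nonneg measurableSet_Ioc (fun y _ => hFnn y)
  have hhm := hh_meas q
  -- Step 1 : expectation as density integral
  have step1 : (∫ ω, p * gaussQ (Real.sqrt (2 * q * (γbar * (ξ ω) ^ 2))) ∂P)
      = ∫ y, F y * (p * gaussQ (Real.sqrt (2*q*(γbar*y^2)))) := by
    rw [← integral_map hξmeas.aemeasurable hg.aestronglyMeasurable, hlaw]
    rw [show (fun y => ENNReal.ofReal (F y)) = (fun y => ((F y).toNNReal : ℝ≥0∞)) from rfl]
    rw [integral_withDensity_eq_integral_smul hFmeas.real_toNNReal]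
    congr 1; funext y
    rw [NNReal.smul_def, Real.coe_toNNReal _ (hFnn y)]
    rw [smul_eq_mul]
  -- Step 2 : Q-function representation, pointwise
  have step2 : ∀ y : ℝ, F y * (p * gaussQ (Real.sqrt (2*q*(γbar*y^2))))
      = (p*Real.sqrt q/(2*Real.sqrt π)) * (F y * H y) := by
    intro y
    rcases le_or_gt y 0 with hy | hy
    · have hFy : F y = 0 := by simp only [hF]; exact if_neg (not_lt.mpr hy)
      rw [hFy]; ring
    · have harg : 0 < 2*q*(γbar*y^2) := by positivity
      have hx : 0 < Real.sqrt (2*q*(γbar*y^2)) := Real.sqrt_pos.mpr harg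
      have hsq : (Real.sqrt (2*q*(γbar*y^2)))^2/(2*q) = γbar*y^2 := by
        rw [Real.sq_sqrt harg.le]; field_simp
      rw [gaussQ_rep q _ hq hx, hsq]
      simp only [hHdef, hhdef]
      ring
  -- Step 3 : Tonelli
  have step3 : (∫ y, F y * H y) = ∫ t in Ioi (0:ℝ), h t * G t := by
    have L1 : (∫ y, F y * H y) = (∫⁻ y, ENNReal.ofReal (F y * H y)).toReal := by
      rw [integral_eq_lintegral_of_nonneg_ae
        (Filter.Eventually.of_forall (fun y => mul_nonneg (hFnn y) (hHnn y)))
        (hFmeas.mul hHmeas).aestronglyMeasurable]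
    have hHofReal : ∀ y : ℝ, ENNReal.ofReal (H y)
        = ∫⁻ t, (Ioi (γbar*y^2)).indicator (fun t' => ENNReal.ofReal (h t')) t := by
      intro y
      rw [lintegral_indicator measurableSet_Ioi]
      exact ofReal_integral_eq_lintegral_ofReal (hInt' q hq _)
        (Filter.Eventually.of_forall (fun t => hh_nn q t))
    have L2 : (∫⁻ y, ENNReal.ofReal (F y * H y))
        = ∫⁻ y, ∫⁻ t, ENNReal.ofReal (F y) *
            (Ioi (γbar*y^2)).indicator (fun t' => ENNReal.ofReal (h t')) t := by
      refine lintegral_congr (fun y => ?_)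
      rw [ENNReal.ofReal_mul (hFnn y), hHofReal y, lintegral_const_mul _
        ((hhm.ennreal_ofReal).indicator measurableSet_Ioi)]
    have hSmeas : MeasurableSet {z : ℝ×ℝ | γbar*z.1^2 < z.2} :=
      measurableSet_lt (by fun_prop) measurable_snd
    have hunc : Measurable (Function.uncurry fun y t => ENNReal.ofReal (F y) *
        (Ioi (γbar*y^2)).indicator (fun t' => ENNReal.ofReal (h t')) t) := by
      have heq : (Function.uncurry fun y t => ENNReal.ofReal (F y) *
          (Ioi (γbar*y^2)).indicator (fun t' => ENNReal.ofReal (h t')) t)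
          = fun z : ℝ×ℝ => ENNReal.ofReal (F z.1) *
            ({z : ℝ×ℝ | γbar*z.1^2 < z.2}).indicator
              (fun z : ℝ×ℝ => ENNReal.ofReal (h z.2)) z := by
        funext z
        rcases z with ⟨y, t⟩
        simp only [Function.uncurry, indicator, mem_Ioi, mem_setOf_eq]
      rw [heq]
      exact (ENNReal.measurable_ofReal.comp (hFmeas.comp measurable_fst)).mul
        ((ENNReal.measurable_ofReal.comp (hhm.comp measurable_snd)).indicator hSmeas)
    have L3 := lintegral_lintegral_swap (μ := volume) (ν := volume) hunc.aemeasurable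
    have R1 : ∀ t : ℝ, (∫⁻ y, ENNReal.ofReal (F y) *
          (Ioi (γbar*y^2)).indicator (fun t' => ENNReal.ofReal (h t')) t)
        = (Ioi (0:ℝ)).indicator (fun t' => ENNReal.ofReal (h t' * G t')) t := by
      intro t
      rcases le_or_gt t 0 with ht | ht
      · rw [indicator_of_notMem (by simpa using not_lt.mpr ht)]
        have hz : ∀ y : ℝ, ENNReal.ofReal (F y) *
            (Ioi (γbar*y^2)).indicator (fun t' => ENNReal.ofReal (h t')) t = 0 := by
          intro y
          rw [indicator_of_notMem (by simp only [mem_Ioi, not_lt]; nlinarith), mul_zero]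
        simp only [hz, lintegral_zero]
      · rw [indicator_of_mem (mem_Ioi.mpr ht)]
        have hkey : ∀ y : ℝ, ENNReal.ofReal (F y) *
            (Ioi (γbar*y^2)).indicator (fun t' => ENNReal.ofReal (h t')) t
            = ENNReal.ofReal (h t) * (Ioo (0:ℝ) (Real.sqrt (t/γbar))).indicator
                (fun y => ENNReal.ofReal (F y)) y := by
          intro y
          rcases le_or_gt y 0 with hy | hy
          · have hFy : F y = 0 := by simp only [hF]; exact if_neg (not_lt.mpr hy)
            rw [hFy, ENNReal.ofReal_zero, zero_mul,
              indicator_of_notMem (show y ∉ Ioo (0:ℝ) (Real.sqrt (t/γbar)) from fun hmem => absurd hmem.1 (not_lt.mpr hy)), mul_zero]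
          · have hiff : γbar*y^2 < t ↔ y < Real.sqrt (t/γbar) := by
              constructor
              · intro h2
                exact (Real.lt_sqrt hy.le).mpr ((lt_div_iff₀ hγbar).mpr (by nlinarith))
              · intro h2
                have h3 := (lt_div_iff₀ hγbar).mp ((Real.lt_sqrt hy.le).mp h2)
                nlinarith
            by_cases hyc : y < Real.sqrt (t/γbar)
            · rw [indicator_of_mem (mem_Ioi.mpr (hiff.mpr hyc)),
                indicator_of_mem (mem_Ioo.mpr ⟨hy, hyc⟩), mul_comm]
            · rw [indicator_of_notMem (show t ∉ Ioi (γbar*y^2) from fun h2 => hyc (hiff.mp h2)),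
                indicator_of_notMem (show y ∉ Ioo (0:ℝ) (Real.sqrt (t/γbar)) from fun hmem => hyc hmem.2), mul_zero, mul_zero]
        simp only [hkey]
        rw [lintegral_const_mul _
          ((hFmeas.ennreal_ofReal).indicator measurableSet_Ioo),
          ENNReal.ofReal_mul (hh_nn q t)]
        congr 1
        rw [lintegral_indicator measurableSet_Ioo,
          ← ofReal_integral_eq_lintegral_ofReal hFint.integrableOn
            (Filter.Eventually.of_forall hFnn)]
        congr 1
        simp only [hGdef]
        rw [integral_Ioc_eq_integral_Ioo]
    rw [L1, L2, L3, lintegral_congr R1, lintegral_indicator measurableSet_Ioi]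
    exact (integral_eq_lintegral_of_nonneg_ae
      (Filter.Eventually.of_forall (fun t => mul_nonneg (hh_nn q t) (hGnn t)))
      (hhm.mul hGmeas).aestronglyMeasurable).symm
  -- Step 4/5 : rewrite G via lower incomplete Gamma and collect constants
  have step5 : (∫ t in Ioi (0:ℝ), h t * G t)
      = (1/Real.Gamma (a+1)) * ∫ t in Ioi (0:ℝ),
          Real.exp (-q*t) * t ^ (-(1:ℝ)/2) *
            lowerIncGamma (a+1) (Real.sqrt t/(b*Real.sqrt γbar)) := by
    rw [← integral_const_mul]
    refine setIntegral_congr_fun measurableSet_Ioi (fun t ht => ?_)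
    have ht0 : (0:ℝ) < t := ht
    have hGt : G t = lowerIncGamma (a+1) (Real.sqrt t/(b*Real.sqrt γbar))
        / Real.Gamma (a+1) := by
      simp only [hGdef, hF]
      rw [cdf_eq a b ha hb (Real.sqrt (t/γbar))]
      congr 2
      rw [Real.sqrt_div ht0.le, div_div, mul_comm (Real.sqrt γbar) b]
    rw [hGt]
    simp only [hhdef]
    ring
  calc (∫ ω, p * gaussQ (Real.sqrt (2 * q * (γbar * (ξ ω) ^ 2))) ∂P)
      = ∫ y, (p*Real.sqrt q/(2*Real.sqrt π)) * (F y * H y) := by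
        rw [step1]; exact integral_congr_ae (Filter.Eventually.of_forall step2)
    _ = (p*Real.sqrt q/(2*Real.sqrt π)) * ∫ y, F y * H y := integral_const_mul _ _
    _ = (p*Real.sqrt q/(2*Real.sqrt π)) * ((1/Real.Gamma (a+1)) *
          ∫ t in Ioi (0:ℝ), Real.exp (-q*t) * t ^ (-(1:ℝ)/2) *
            lowerIncGamma (a+1) (Real.sqrt t/(b*Real.sqrt γbar))) := by
        rw [step3, step5]
    _ = (p * Real.sqrt q / (2 * Real.sqrt π * Real.Gamma (a + 1))) *
        ∫ t in Set.Ioi (0 : ℝ),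
          Real.exp (-q * t) * t ^ (-(1 : ℝ) / 2) *
            lowerIncGamma (a + 1) (Real.sqrt t / (b * Real.sqrt γbar)) := by
        have hπ0 : (0:ℝ) < Real.sqrt π := Real.sqrt_pos.mpr Real.pi_pos
        field_simp
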